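/- Let [F̲,F̄] be a p-box, B = [b₀,b₁] with F̲(b₁) > F̄(b₀), and h continuous bounded. Then the upper conditional expectation Ē(h|B) = sup_{F∈Φ(F̲,F̄)} (∫_B h dF)/F(B) equals sup over α ∈ [F̲(b₀), F̄(b₀)], β ∈ [F̲(b₁), F̄(b₁)], α < β, of (1/(β−α)) ∫_α^β sup_{x ∈ A_γ ∩ B} h(x) dγ, where A_γ = [F̄⁻¹(γ), F̲⁻¹(γ)]. -/

import Mathlib

open Set Filter MeasureTheory

namespace UCERS

lemma sSup_image_Icc_mem {h : ℝ → ℝ} (hcont : Continuous h) {a b : ℝ} (hab : a ≤ b) :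
    sSup (h '' Icc a b) ∈ h '' Icc a b :=
  (isCompact_Icc.image hcont).sSup_mem ((nonempty_Icc.2 hab).image h)

lemma le_sSup_image_Icc {h : ℝ → ℝ} (hcont : Continuous h) {a b x : ℝ} (hx : x ∈ Icc a b) :
    h x ≤ sSup (h '' Icc a b) :=
  le_csSup (isCompact_Icc.image hcont).bddAbove (mem_image_of_mem h hx)

lemma measurable_sSup_image_Icc {h : ℝ → ℝ} (hcont : Continuous h) {p q : ℝ → ℝ}
    (hp : Measurable p) (hq : Measurable q) :
    Measurable (fun γ => sSup (h '' Icc (p γ) (q γ))) := by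
  apply measurable_of_Ioi
  intro t
  have hset : (fun γ => sSup (h '' Icc (p γ) (q γ))) ⁻¹' Ioi t
      = ({γ | q γ < p γ} ∩ {γ | t < 0}) ∪ ({γ | p γ ≤ q γ} ∩ {γ | t < h (p γ)}) ∪
        ⋃ r : ℚ, ({γ | p γ ≤ (r:ℝ)} ∩ {γ | (r:ℝ) ≤ q γ} ∩ {γ | t < h r}) := by
    ext γ
    simp only [mem_preimage, mem_Ioi, mem_union, mem_iUnion, mem_inter_iff, mem_setOf_eq]
    constructor
    · intro ht
      rcases le_or_gt (p γ) (q γ) with hpq | hpq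
      · obtain ⟨x, hxmem, hxeq⟩ := sSup_image_Icc_mem hcont hpq
        rw [← hxeq] at ht
        rcases eq_or_lt_of_le hxmem.1 with hx1 | hx1
        · exact Or.inl (Or.inr ⟨hpq, hx1 ▸ ht⟩)
        · right
          have hopen : IsOpen (h ⁻¹' Ioi t) := isOpen_Ioi.preimage hcont
          obtain ⟨δ, hδpos, hδ⟩ := Metric.isOpen_iff.1 hopen x ht
          obtain ⟨r, hr1, hr2⟩ := exists_rat_btwn (max_lt hx1 (sub_lt_self x hδpos))
          refine ⟨r, ⟨((max_lt_iff.1 hr1).1).le, hr2.le.trans hxmem.2⟩, ?_⟩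
          refine hδ ?_
          rw [Metric.mem_ball, Real.dist_eq, abs_lt]
          have := (max_lt_iff.1 hr1).2
          constructor <;> linarith
      · left; left
        refine ⟨hpq, ?_⟩
        rw [Icc_eq_empty (not_le.mpr hpq), image_empty, Real.sSup_empty] at ht
        exact ht
    · rintro ((⟨h1, h2⟩ | ⟨h1, h2⟩) | ⟨r, ⟨hr1, hr2⟩, hr3⟩)
      · rw [Icc_eq_empty (not_le.mpr h1), image_empty, Real.sSup_empty]; exact h2
      · exact lt_of_lt_of_le h2 (le_sSup_image_Icc hcont ⟨le_refl _, h1⟩)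
      · exact lt_of_lt_of_le hr3 (le_sSup_image_Icc hcont ⟨hr1, hr2⟩)
  rw [hset]
  clear hset
  have hc0 : MeasurableSet {γ : ℝ | t < (0:ℝ)} := by
    by_cases ht : t < 0 <;> simp [ht, MeasurableSet.univ]
  refine MeasurableSet.union (MeasurableSet.union ?_ ?_) (MeasurableSet.iUnion fun r => ?_)
  · exact (measurableSet_lt hq hp).inter hc0
  · exact (measurableSet_le hp hq).inter (measurableSet_lt measurable_const (hcont.measurable.comp hp))
  · refine ((measurableSet_le hp measurable_const).inter
      (measurableSet_le measurable_const hq)).inter ?_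
    by_cases hr : t < h r <;> simp [hr, MeasurableSet.univ]


/-! ### Selection function -/

noncomputable def selAux (h : ℝ → ℝ) (ε : ℝ) (p q : ℝ → ℝ) (γ : ℝ) : ℝ :=
  sSup (Icc (p γ) (q γ) ∩ h ⁻¹' Ici (sSup (h '' Icc (p γ) (q γ)) - ε))

lemma selAux_mem {h : ℝ → ℝ} (hcont : Continuous h) {ε : ℝ} (hε : 0 ≤ ε) {p q : ℝ → ℝ}
    {γ : ℝ} (hpq : p γ ≤ q γ) :
    selAux h ε p q γ ∈ Icc (p γ) (q γ) ∩ h ⁻¹' Ici (sSup (h '' Icc (p γ) (q γ)) - ε) := by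
  have hcpt : IsCompact (Icc (p γ) (q γ) ∩ h ⁻¹' Ici (sSup (h '' Icc (p γ) (q γ)) - ε)) :=
    isCompact_Icc.inter_right (isClosed_Ici.preimage hcont)
  have hne : (Icc (p γ) (q γ) ∩ h ⁻¹' Ici (sSup (h '' Icc (p γ) (q γ)) - ε)).Nonempty := by
    obtain ⟨x, hx, hhx⟩ := sSup_image_Icc_mem hcont hpq
    exact ⟨x, hx, by simp only [mem_preimage, mem_Ici, hhx]; linarith⟩
  exact hcpt.sSup_mem hne

lemma selAux_bddAbove (h : ℝ → ℝ) (ε : ℝ) (p q : ℝ → ℝ) (γ : ℝ) :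
    BddAbove (Icc (p γ) (q γ) ∩ h ⁻¹' Ici (sSup (h '' Icc (p γ) (q γ)) - ε)) :=
  BddAbove.mono inter_subset_left bddAbove_Icc

lemma selAux_gt {h : ℝ → ℝ} (hcont : Continuous h) {ε : ℝ} (hε : 0 < ε) {p q : ℝ → ℝ}
    {γ b₀ : ℝ} (hpq : p γ ≤ q γ) (hb₀ : b₀ ≤ p γ) (hb₀q : b₀ < q γ) :
    b₀ < selAux h ε p q γ := by
  rcases lt_or_eq_of_le hb₀ with hlt | heq
  · exact lt_of_lt_of_le hlt (selAux_mem hcont hε.le hpq).1.1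
  obtain ⟨x, hx, hhx⟩ := sSup_image_Icc_mem hcont hpq
  rcases lt_or_ge b₀ x with hbx | hxb
  · refine lt_of_lt_of_le hbx (le_csSup (selAux_bddAbove h ε p q γ)
      ⟨hx, by simp only [mem_preimage, mem_Ici, hhx]; linarith⟩)
  · have hxeq : x = b₀ := le_antisymm hxb (heq ▸ hx.1)
    have hopen : IsOpen (h ⁻¹' Ioi (h b₀ - ε)) := isOpen_Ioi.preimage hcont
    have hb0mem : b₀ ∈ h ⁻¹' Ioi (h b₀ - ε) := by
      simp only [mem_preimage, mem_Ioi]; linarith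
    obtain ⟨δ, hδpos, hδ⟩ := Metric.isOpen_iff.1 hopen b₀ hb0mem
    set y := min (b₀ + δ / 2) (q γ) with hy
    have hyb : b₀ < y := lt_min (by linarith) hb₀q
    have hymem : y ∈ Icc (p γ) (q γ) := ⟨heq ▸ hyb.le, min_le_right _ _⟩
    have hyball : y ∈ Metric.ball b₀ δ := by
      rw [Metric.mem_ball, Real.dist_eq, abs_lt]
      have : y ≤ b₀ + δ / 2 := min_le_left _ _
      constructor <;> linarith
    have hhy : h y ∈ Ici (sSup (h '' Icc (p γ) (q γ)) - ε) := by
      have h1 : h b₀ - ε < h y := hδ hyball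
      rw [mem_Ici, ← hhx, hxeq]
      linarith
    exact lt_of_lt_of_le hyb (le_csSup (selAux_bddAbove h ε p q γ) ⟨hymem, hhy⟩)

lemma selAux_measurable {h : ℝ → ℝ} (hcont : Continuous h) {ε : ℝ} (hε : 0 ≤ ε) {p q : ℝ → ℝ}
    (hp : Measurable p) (hq : Measurable q) :
    Measurable (selAux h ε p q) := by
  apply measurable_of_Ioi
  intro t
  have hset : (selAux h ε p q) ⁻¹' Ioi t
      = ({γ | q γ < p γ} ∩ {γ | t < 0}) ∪
        ⋃ u : ℚ, ({γ | t < (u:ℝ)} ∩ {γ | p γ ≤ q γ} ∩ {γ | max (p γ) (u:ℝ) ≤ q γ} ∩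
          {γ | sSup (h '' Icc (p γ) (q γ)) - ε
                ≤ sSup (h '' Icc (max (p γ) (u:ℝ)) (q γ))}) := by
    ext γ
    simp only [mem_preimage, mem_Ioi, mem_union, mem_iUnion, mem_inter_iff, mem_setOf_eq]
    constructor
    · intro ht
      rcases le_or_gt (p γ) (q γ) with hpq | hpq
      · right
        obtain ⟨hmem, hbig⟩ := selAux_mem hcont hε hpq
        obtain ⟨u, hu1, hu2⟩ := exists_rat_btwn ht
        refine ⟨u, ⟨⟨hu1, hpq⟩, max_le hpq (hu2.le.trans hmem.2)⟩, ?_⟩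
        refine le_trans hbig (le_sSup_image_Icc hcont ⟨max_le hmem.1 hu2.le, hmem.2⟩)
      · left
        refine ⟨hpq, ?_⟩
        have : selAux h ε p q γ = 0 := by
          unfold selAux
          rw [Icc_eq_empty (not_le.mpr hpq), empty_inter, Real.sSup_empty]
        rw [this] at ht; exact ht
    · rintro (⟨h1, h2⟩ | ⟨u, ⟨⟨hu1, hu2⟩, hu3⟩, hu4⟩)
      · have : selAux h ε p q γ = 0 := by
          unfold selAux
          rw [Icc_eq_empty (not_le.mpr h1), empty_inter, Real.sSup_empty]
        rw [this]; exact h2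
      · obtain ⟨x, hxmem, hxeq⟩ := sSup_image_Icc_mem hcont hu3
        have hxT : x ∈ Icc (p γ) (q γ) ∩ h ⁻¹' Ici (sSup (h '' Icc (p γ) (q γ)) - ε) :=
          ⟨⟨(le_max_left _ _).trans hxmem.1, hxmem.2⟩, by
            simp only [mem_preimage, mem_Ici, hxeq]; exact hu4⟩
        have hle : x ≤ selAux h ε p q γ := le_csSup (selAux_bddAbove h ε p q γ) hxT
        have hux : (u:ℝ) ≤ x := (le_max_right _ _).trans hxmem.1
        linarith
  rw [hset]
  clear hset
  have hc0 : MeasurableSet {γ : ℝ | t < (0:ℝ)} := by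
    by_cases ht : t < 0 <;> simp [ht, MeasurableSet.univ]
  refine MeasurableSet.union ((measurableSet_lt hq hp).inter hc0)
    (MeasurableSet.iUnion fun u => ?_)
  have hcu : MeasurableSet {γ : ℝ | t < (u:ℝ)} := by
    by_cases ht : t < (u:ℝ) <;> simp [ht, MeasurableSet.univ]
  refine ((hcu.inter (measurableSet_le hp hq)).inter
    (measurableSet_le (hp.max measurable_const) hq)).inter ?_
  exact measurableSet_le
    ((measurable_sSup_image_Icc hcont hp hq).sub measurable_const)
    (measurable_sSup_image_Icc hcont (hp.max measurable_const) hq)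

/-! ### Generalized inverses -/

lemma stf_right_le (F : StieltjesFunction ℝ) {γ x : ℝ} (H : ∀ z, x < z → γ ≤ F z) : γ ≤ F x := by
  have htd : Tendsto F (nhdsWithin x (Ioi x)) (nhds (F x)) :=
    (F.right_continuous x).tendsto.mono_left (nhdsWithin_mono x Ioi_subset_Ici_self)
  exact ge_of_tendsto htd (eventually_nhdsWithin_of_forall (fun z hz => H z hz))

lemma stf_nonneg (F : StieltjesFunction ℝ) (h0 : Tendsto F atBot (nhds 0)) (x : ℝ) : 0 ≤ F x :=
  le_of_tendsto h0 (eventually_atBot.2 ⟨x, fun y hy => F.mono hy⟩)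

lemma stf_le_one (F : StieltjesFunction ℝ) (h1 : Tendsto F atTop (nhds 1)) (x : ℝ) : F x ≤ 1 :=
  ge_of_tendsto h1 (eventually_atTop.2 ⟨x, fun y hy => F.mono hy⟩)

section Inv

variable (Fl Fu : StieltjesFunction ℝ) {b₀ b₁ : ℝ}

/-- `F̄⁻¹(γ)` -/
noncomputable def gU (γ : ℝ) : ℝ := sSup {x | Fu x < γ}
/-- `F̲⁻¹(γ)` -/
noncomputable def gL (γ : ℝ) : ℝ := sInf {x | Fl x > γ}

lemma gU_set_nonempty (h0 : Tendsto Fu atBot (nhds 0)) {γ : ℝ} (hγ : 0 < γ) :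
    {x | Fu x < γ}.Nonempty :=
  (h0.eventually (eventually_lt_nhds hγ)).exists

lemma gL_set_nonempty (h1 : Tendsto Fl atTop (nhds 1)) {γ : ℝ} (hγ : γ < 1) :
    {x | Fl x > γ}.Nonempty :=
  (h1.eventually (eventually_gt_nhds hγ)).exists

lemma gU_set_bddAbove {γ : ℝ} (hγ : γ ≤ Fu b₁) : BddAbove {x | Fu x < γ} := by
  refine ⟨b₁, fun x hx => ?_⟩
  by_contra hc
  exact absurd hx (not_lt.mpr (hγ.trans (Fu.mono (not_le.1 hc).le)))

lemma gL_set_bddBelow {γ : ℝ} (hγ : Fl b₀ < γ) : BddBelow {x | Fl x > γ} := by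
  refine ⟨b₀, fun x hx => ?_⟩
  by_contra hc
  exact absurd hx (not_lt.mpr (le_trans (Fl.mono (not_le.1 hc).le) hγ.le))

lemma gL_elem_gt {γ x : ℝ} (hγ : Fl b₀ < γ) (hx : Fl x > γ) : b₀ < x := by
  by_contra hc
  exact absurd hx (not_lt.mpr (le_trans (Fl.mono (not_lt.1 hc)) hγ.le))

lemma gU_elem_lt {γ x : ℝ} (hγ : γ ≤ Fu b₁) (hx : Fu x < γ) : x < b₁ := by
  by_contra hc
  exact absurd hx (not_lt.mpr (hγ.trans (Fu.mono (not_lt.1 hc))))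

lemma gU_le_b₁ (h0 : Tendsto Fu atBot (nhds 0)) {γ : ℝ} (hγ0 : 0 < γ) (hγ : γ ≤ Fu b₁) :
    gU Fu γ ≤ b₁ :=
  csSup_le (gU_set_nonempty Fu h0 hγ0) (fun x hx => (gU_elem_lt Fu hγ hx).le)

lemma b₀_lt_gL (h1 : Tendsto Fl atTop (nhds 1)) {γ : ℝ} (hγ1 : γ < 1) (hγ : Fl b₀ < γ) :
    b₀ < gL Fl γ := by
  have hFlγ : γ ≤ Fl (gL Fl γ) := by
    refine stf_right_le Fl (fun z hz => ?_)
    obtain ⟨y, hy, hyz⟩ := (csInf_lt_iff (gL_set_bddBelow Fl hγ)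
      (gL_set_nonempty Fl h1 hγ1)).1 hz
    exact le_trans (le_of_lt hy) (Fl.mono hyz.le)
  by_contra hc
  exact absurd (lt_of_lt_of_le hγ hFlγ) (not_lt.mpr (Fl.mono (not_lt.1 hc)))

lemma gU_le_gL (h0 : Tendsto Fu atBot (nhds 0)) (h1 : Tendsto Fl atTop (nhds 1))
    (hle : ∀ x, Fl x ≤ Fu x) {γ : ℝ} (hγ0 : 0 < γ) (hγ1 : γ < 1) :
    gU Fu γ ≤ gL Fl γ := by
  refine csSup_le (gU_set_nonempty Fu h0 hγ0) (fun x hx => ?_)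
  refine le_csInf (gL_set_nonempty Fl h1 hγ1) (fun y hy => ?_)
  by_contra hc
  have : Fu y ≤ Fu x := Fu.mono (not_le.1 hc).le
  have : Fl y ≤ Fu x := le_trans (hle y) this
  exact absurd (lt_trans hx hy) (not_lt.mpr this)

lemma gU_le_imp (h0 : Tendsto Fu atBot (nhds 0)) {γ x : ℝ} (hγ0 : 0 < γ) (hγ : γ ≤ Fu b₁)
    (hx : gU Fu γ ≤ x) : γ ≤ Fu x := by
  refine stf_right_le Fu (fun z hz => ?_)
  by_contra hc
  exact absurd (le_csSup (gU_set_bddAbove Fu hγ) (not_le.1 hc)) (not_le.mpr (hx.trans_lt hz))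

lemma gL_le_of_lt {γ x : ℝ} (hγ : Fl b₀ < γ) (hx : γ < Fl x) : gL Fl γ ≤ x :=
  csInf_le (gL_set_bddBelow Fl hγ) hx

/-- Clamped versions, globally monotone. -/
noncomputable def aC (b₀ b₁ : ℝ) (γ : ℝ) : ℝ := sSup ({x | Fu x < γ} ∩ Icc b₀ b₁ ∪ {b₀})
noncomputable def cC (b₀ b₁ : ℝ) (γ : ℝ) : ℝ := sInf ({x | Fl x > γ} ∩ Icc b₀ b₁ ∪ {b₁})

lemma aC_mono (hb : b₀ ≤ b₁) : Monotone (aC Fu b₀ b₁) := by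
  intro γ₁ γ₂ h12
  refine csSup_le_csSup ⟨b₁, fun x hx => ?_⟩ ⟨b₀, Or.inr rfl⟩
    (union_subset_union_left _ (inter_subset_inter_left _ (fun x hx => lt_of_lt_of_le hx h12)))
  rcases hx with ⟨-, h2⟩ | h2
  · exact h2.2
  · exact (mem_singleton_iff.1 h2) ▸ hb

lemma cC_mono (hb : b₀ ≤ b₁) : Monotone (cC Fl b₀ b₁) := by
  intro γ₁ γ₂ h12
  refine csInf_le_csInf ⟨b₀, fun x hx => ?_⟩ ⟨b₁, Or.inr rfl⟩
    (union_subset_union_left _ (inter_subset_inter_left _ (fun x hx => lt_of_le_of_lt h12 hx)))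
  rcases hx with ⟨-, h2⟩ | h2
  · exact h2.1
  · exact (mem_singleton_iff.1 h2) ▸ hb

lemma aC_eq (h0 : Tendsto Fu atBot (nhds 0)) (hb : b₀ ≤ b₁) {γ : ℝ}
    (hγ0 : 0 < γ) (hγu : γ ≤ Fu b₁) :
    aC Fu b₀ b₁ γ = max (gU Fu γ) b₀ := by
  have hbdd : BddAbove ({x | Fu x < γ} ∩ Icc b₀ b₁ ∪ {b₀}) := by
    refine ⟨b₁, fun x hx => ?_⟩
    rcases hx with ⟨-, h2⟩ | h2
    · exact h2.2
    · exact (mem_singleton_iff.1 h2) ▸ hb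
  refine le_antisymm (csSup_le ⟨b₀, Or.inr rfl⟩ (fun x hx => ?_)) (max_le ?_ ?_)
  · rcases hx with ⟨h1, -⟩ | h2
    · exact le_max_of_le_left (le_csSup (gU_set_bddAbove Fu hγu) h1)
    · exact le_max_of_le_right (mem_singleton_iff.1 h2).le
  · refine csSup_le (gU_set_nonempty Fu h0 hγ0) (fun x hx => ?_)
    rcases le_or_gt x b₀ with hxb | hxb
    · exact hxb.trans (le_csSup hbdd (Or.inr rfl))
    · exact le_csSup hbdd (Or.inl ⟨hx, hxb.le, (gU_elem_lt Fu hγu hx).le⟩)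
  · exact le_csSup hbdd (Or.inr rfl)

lemma cC_eq (h1 : Tendsto Fl atTop (nhds 1)) (hb : b₀ ≤ b₁) {γ : ℝ}
    (hγ1 : γ < 1) (hγl : Fl b₀ < γ) :
    cC Fl b₀ b₁ γ = min (gL Fl γ) b₁ := by
  have hbdd : BddBelow ({x | Fl x > γ} ∩ Icc b₀ b₁ ∪ {b₁}) := by
    refine ⟨b₀, fun x hx => ?_⟩
    rcases hx with ⟨-, h2⟩ | h2
    · exact h2.1
    · exact (mem_singleton_iff.1 h2) ▸ hb
  refine le_antisymm (le_min ?_ ?_) (le_csInf ⟨b₁, Or.inr rfl⟩ (fun x hx => ?_))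
  · refine le_csInf (gL_set_nonempty Fl h1 hγ1) (fun x hx => ?_)
    rcases le_or_gt b₁ x with hxb | hxb
    · exact (csInf_le hbdd (Or.inr rfl)).trans hxb
    · exact csInf_le hbdd (Or.inl ⟨hx, (gL_elem_gt Fl hγl hx).le, hxb.le⟩)
  · exact csInf_le hbdd (Or.inr rfl)
  · rcases hx with ⟨h1', -⟩ | h2
    · exact min_le_of_left_le (csInf_le (gL_set_bddBelow Fl hγl) h1')
    · exact (min_le_right _ _).trans (mem_singleton_iff.1 h2).ge

end Inv

/-! ### Quantile of a distribution function -/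

noncomputable def quant (F : StieltjesFunction ℝ) (γ : ℝ) : ℝ := sInf {x | γ ≤ F x}

lemma quant_set_nonempty (F : StieltjesFunction ℝ) (h1 : Tendsto F atTop (nhds 1))
    {γ : ℝ} (hγ : γ < 1) : {x | γ ≤ F x}.Nonempty := by
  obtain ⟨x, hx⟩ := (h1.eventually (eventually_gt_nhds hγ)).exists
  exact ⟨x, hx.le⟩

lemma quant_set_bddBelow (F : StieltjesFunction ℝ) (h0 : Tendsto F atBot (nhds 0))
    {γ : ℝ} (hγ : 0 < γ) : BddBelow {x | γ ≤ F x} := by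
  obtain ⟨x₀, hx₀⟩ := (h0.eventually (eventually_lt_nhds hγ)).exists
  refine ⟨x₀, fun y hy => ?_⟩
  by_contra hc
  exact absurd hy (not_le.mpr (lt_of_le_of_lt (F.mono (not_le.1 hc).le) hx₀))

lemma quant_le_iff (F : StieltjesFunction ℝ) (h0 : Tendsto F atBot (nhds 0))
    (h1 : Tendsto F atTop (nhds 1)) {γ x : ℝ} (hγ0 : 0 < γ) (hγ1 : γ < 1) :
    quant F γ ≤ x ↔ γ ≤ F x := by
  constructor
  · intro hq
    refine stf_right_le F (fun z hz => ?_)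
    obtain ⟨y, hy, hyz⟩ := (csInf_lt_iff (quant_set_bddBelow F h0 hγ0)
      (quant_set_nonempty F h1 hγ1)).1 (lt_of_le_of_lt hq hz)
    exact le_trans hy (F.mono hyz.le)
  · exact fun hFx => csInf_le (quant_set_bddBelow F h0 hγ0) hFx

lemma quant_mono_on (F : StieltjesFunction ℝ) (h0 : Tendsto F atBot (nhds 0))
    (h1 : Tendsto F atTop (nhds 1)) {γ₁ γ₂ : ℝ} (hγ0 : 0 < γ₁) (h12 : γ₁ ≤ γ₂) (hγ1 : γ₂ < 1) :
    quant F γ₁ ≤ quant F γ₂ :=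
  csInf_le_csInf (quant_set_bddBelow F h0 hγ0) (quant_set_nonempty F h1 hγ1)
    (fun x hx => le_trans h12 hx)

/-! ### Representation lemma -/

lemma rep_integral (F : StieltjesFunction ℝ) (h : ℝ → ℝ) (hcont : Continuous h)
    (T : ℝ → ℝ) (α β b₀ b₁ : ℝ)
    (hT : AEMeasurable T (volume.restrict (Ioo α β)))
    (hIic : ∀ x, Measure.map T (volume.restrict (Ioo α β)) (Iic x)
            = (F.measure.restrict (Ioc b₀ b₁)) (Iic x)) :
    ∫ x in Ioc b₀ b₁, h x ∂F.measure = ∫ γ in Ioo α β, h (T γ) := by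
  haveI hfin1 : IsFiniteMeasure (volume.restrict (Ioo α β)) :=
    ⟨by rw [Measure.restrict_apply_univ]; exact measure_Ioo_lt_top⟩
  haveI hfin2 : IsFiniteMeasure (Measure.map T (volume.restrict (Ioo α β))) :=
    ⟨by rw [Measure.map_apply_of_aemeasurable hT MeasurableSet.univ]
        exact measure_lt_top _ _⟩
  have hext : Measure.map T (volume.restrict (Ioo α β)) = F.measure.restrict (Ioc b₀ b₁) :=
    Measure.ext_of_Iic _ _ hIic
  calc ∫ x in Ioc b₀ b₁, h x ∂F.measure
      = ∫ x, h x ∂(Measure.map T (volume.restrict (Ioo α β))) := by rw [hext]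
    _ = ∫ γ in Ioo α β, h (T γ) := integral_map hT hcont.aestronglyMeasurable

/-! ### Right continuity from monotonicity and pointwise approximation -/

lemma monoRC {f : ℝ → ℝ} (hf : Monotone f) {x : ℝ}
    (hx : ∀ ε > 0, ∃ y, x < y ∧ f y < f x + ε) : ContinuousWithinAt f (Ici x) x := by
  rw [Metric.continuousWithinAt_iff]
  intro ε hε
  obtain ⟨y, hxy, hfy⟩ := hx ε hε
  refine ⟨y - x, by linarith, fun z hz hdist => ?_⟩
  rw [Real.dist_eq, abs_lt] at hdist
  have h1 : f x ≤ f z := hf hz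
  have h2 : f z ≤ f y := hf (by linarith : z ≤ y)
  rw [Real.dist_eq, abs_lt]
  constructor <;> linarith

/-! ### Bound on M -/

lemma M_abs_le {h : ℝ → ℝ} (hcont : Continuous h) {C : ℝ} (hbd : ∀ x, |h x| ≤ C)
    (p q r s : ℝ) : |sSup (h '' (Icc p q ∩ Icc r s))| ≤ C := by
  have hC0 : 0 ≤ C := (abs_nonneg (h 0)).trans (hbd 0)
  rw [Icc_inter_Icc]
  rcases le_or_gt (p ⊔ r) (q ⊓ s) with hpq | hpq
  · obtain ⟨x, -, hx⟩ := sSup_image_Icc_mem hcont hpq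
    rw [← hx]; exact hbd x
  · rw [Icc_eq_empty (not_le.mpr hpq), image_empty, Real.sSup_empty]
    simpa using hC0

/-! ### Direction ≤ : each compatible F is dominated -/

lemma dir_le (Fl Fu : StieltjesFunction ℝ)
    (hFl : Tendsto Fl atBot (nhds 0) ∧ Tendsto Fl atTop (nhds 1))
    (hFu : Tendsto Fu atBot (nhds 0) ∧ Tendsto Fu atTop (nhds 1))
    (b₀ b₁ : ℝ) (hb : b₀ ≤ b₁) (hpos : Fu b₀ < Fl b₁)
    (h : ℝ → ℝ) (hcont : Continuous h) (C : ℝ) (hbd : ∀ x, |h x| ≤ C)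
    (F : StieltjesFunction ℝ) (hF0 : Tendsto F atBot (nhds 0)) (hF1 : Tendsto F atTop (nhds 1))
    (hFb : ∀ x, Fl x ≤ F x ∧ F x ≤ Fu x) :
    ∫ x in Ioc b₀ b₁, h x ∂F.measure
      ≤ ∫ γ in Ioo (F b₀) (F b₁),
          sSup (h '' (Icc (gU Fu γ) (gL Fl γ) ∩ Icc b₀ b₁)) := by
  set α := F b₀ with hα
  set β := F b₁ with hβ
  have hα0 : 0 ≤ α := stf_nonneg F hF0 b₀
  have hβ1 : β ≤ 1 := stf_le_one F hF1 b₁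
  have hαβ : α < β := lt_of_le_of_lt (hFb b₀).2 (lt_of_lt_of_le hpos (hFb b₁).1)
  -- γ facts
  have hγfacts : ∀ γ ∈ Ioo α β, 0 < γ ∧ γ < 1 ∧ Fl b₀ < γ ∧ γ ≤ Fu b₁ := by
    intro γ hγ
    exact ⟨lt_of_le_of_lt hα0 hγ.1, lt_of_lt_of_le hγ.2 hβ1,
      lt_of_le_of_lt (hFb b₀).1 hγ.1, le_trans hγ.2.le (hFb b₁).2⟩
  -- AEMeasurability of the quantile
  have hTmeas : AEMeasurable (quant F) (volume.restrict (Ioo α β)) := by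
    refine aemeasurable_restrict_of_monotoneOn measurableSet_Ioo ?_
    intro γ₁ h₁ γ₂ h₂ h12
    exact quant_mono_on F hF0 hF1 (lt_of_le_of_lt hα0 h₁.1) h12 (lt_of_lt_of_le h₂.2 hβ1)
  -- the Iic identity
  have hIic : ∀ x, Measure.map (quant F) (volume.restrict (Ioo α β)) (Iic x)
      = (F.measure.restrict (Ioc b₀ b₁)) (Iic x) := by
    intro x
    rw [Measure.map_apply_of_aemeasurable hTmeas measurableSet_Iic,
      Measure.restrict_apply' measurableSet_Ioo,
      Measure.restrict_apply' measurableSet_Ioc]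
    have hset1 : quant F ⁻¹' Iic x ∩ Ioo α β = Ioo α β ∩ Iic (F x) := by
      ext γ
      simp only [mem_inter_iff, mem_preimage, mem_Iic, mem_Ioo]
      constructor
      · rintro ⟨h1, h2⟩
        exact ⟨h2, (quant_le_iff F hF0 hF1 (lt_of_le_of_lt hα0 h2.1)
          (lt_of_lt_of_le h2.2 hβ1)).1 h1⟩
      · rintro ⟨h1, h2⟩
        exact ⟨(quant_le_iff F hF0 hF1 (lt_of_le_of_lt hα0 h1.1)
          (lt_of_lt_of_le h1.2 hβ1)).2 h2, h1⟩
    have hset2 : Iic x ∩ Ioc b₀ b₁ = Ioc b₀ (min x b₁) := by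
      ext y
      simp only [mem_inter_iff, mem_Iic, mem_Ioc, le_min_iff]
      tauto
    rw [hset1, hset2, F.measure_Ioc]
    rcases lt_or_ge (F x) β with hxβ | hxβ
    · have hxb₁ : x ≤ b₁ := by
        by_contra hc
        exact absurd (F.mono (not_le.1 hc).le) (not_le.mpr hxβ)
      have : Ioo α β ∩ Iic (F x) = Ioc α (F x) := by
        ext γ
        simp only [mem_inter_iff, mem_Ioo, mem_Iic, mem_Ioc]
        constructor
        · rintro ⟨⟨h1, h2⟩, h3⟩; exact ⟨h1, h3⟩
        · rintro ⟨h1, h2⟩; exact ⟨⟨h1, lt_of_le_of_lt h2 hxβ⟩, h2⟩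
      rw [this, Real.volume_Ioc, min_eq_left hxb₁]
    · have hFxβ : F (min x b₁) = β := by
        rcases le_total x b₁ with hxb | hxb
        · rw [min_eq_left hxb]
          exact le_antisymm (by rw [hβ]; exact F.mono hxb) hxβ
        · rw [min_eq_right hxb]
      have : Ioo α β ∩ Iic (F x) = Ioo α β := by
        refine inter_eq_left.mpr (fun γ hγ => ?_)
        exact le_trans hγ.2.le hxβ
      rw [this, Real.volume_Ioo, hFxβ]
  -- representation
  rw [rep_integral F h hcont (quant F) α β b₀ b₁ hTmeas hIic]
  -- pointwise comparison and integrability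
  have hptw : ∀ γ ∈ Ioo α β,
      h (quant F γ) ≤ sSup (h '' (Icc (gU Fu γ) (gL Fl γ) ∩ Icc b₀ b₁)) := by
    intro γ hγ
    obtain ⟨hγ0, hγ1, hγl, hγu⟩ := hγfacts γ hγ
    have hq1 : gU Fu γ ≤ quant F γ := by
      refine csSup_le (gU_set_nonempty Fu hFu.1 hγ0) (fun x hx => ?_)
      refine le_csInf (quant_set_nonempty F hF1 hγ1) (fun y hy => ?_)
      by_contra hc
      have h1 : F y ≤ F x := F.mono (not_le.1 hc).le
      have h2 : F x ≤ Fu x := (hFb x).2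
      exact absurd hy (not_le.mpr (lt_of_le_of_lt (h1.trans h2) hx))
    have hq2 : quant F γ ≤ gL Fl γ := by
      refine le_csInf (gL_set_nonempty Fl hFl.2 hγ1) (fun x hx => ?_)
      exact (quant_le_iff F hF0 hF1 hγ0 hγ1).2 (le_trans (le_of_lt hx) (hFb x).1)
    have hq3 : b₀ < quant F γ := by
      by_contra hc
      have : quant F γ ≤ b₀ := not_lt.1 hc
      have : γ ≤ F b₀ := (quant_le_iff F hF0 hF1 hγ0 hγ1).1 this
      exact absurd hγ.1 (not_lt.mpr this)
    have hq4 : quant F γ ≤ b₁ := (quant_le_iff F hF0 hF1 hγ0 hγ1).2 (hβ ▸ hγ.2.le)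
    have hmem : quant F γ ∈ Icc (gU Fu γ) (gL Fl γ) ∩ Icc b₀ b₁ :=
      ⟨⟨hq1, hq2⟩, hq3.le, hq4⟩
    refine le_csSup ?_ (mem_image_of_mem h hmem)
    rw [Icc_inter_Icc]
    exact (isCompact_Icc.image hcont).bddAbove
  have hint1 : IntegrableOn (fun γ => h (quant F γ)) (Ioo α β) := by
    refine Integrable.mono' (integrable_const C)
      (hcont.measurable.comp_aemeasurable hTmeas).aestronglyMeasurable
      (ae_of_all _ (fun γ => ?_))
    rw [Real.norm_eq_abs]; exact hbd _
  have hint2 : IntegrableOn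
      (fun γ => sSup (h '' (Icc (gU Fu γ) (gL Fl γ) ∩ Icc b₀ b₁))) (Ioo α β) := by
    have hmeasg : Measurable (fun γ => sSup (h '' Icc (aC Fu b₀ b₁ γ) (cC Fl b₀ b₁ γ))) :=
      measurable_sSup_image_Icc hcont (aC_mono Fu hb).measurable (cC_mono Fl hb).measurable
    have heq : (fun γ => sSup (h '' Icc (aC Fu b₀ b₁ γ) (cC Fl b₀ b₁ γ)))
        =ᵐ[volume.restrict (Ioo α β)]
        (fun γ => sSup (h '' (Icc (gU Fu γ) (gL Fl γ) ∩ Icc b₀ b₁))) := by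
      refine (ae_restrict_iff' measurableSet_Ioo).2 (ae_of_all _ (fun γ hγ => ?_))
      obtain ⟨hγ0, hγ1, hγl, hγu⟩ := hγfacts γ hγ
      simp only [Icc_inter_Icc]
      rw [aC_eq Fu hFu.1 hb hγ0 hγu, cC_eq Fl hFl.2 hb hγ1 hγl]
    refine Integrable.mono' (integrable_const C)
      (hmeasg.aestronglyMeasurable.congr heq) (ae_of_all _ (fun γ => ?_))
    rw [Real.norm_eq_abs]; exact M_abs_le hcont hbd _ _ _ _
  exact setIntegral_mono_on hint1 hint2 measurableSet_Ioo hptw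

/-! ### Direction ≥ : construction of a near-optimal compatible F -/

lemma dir_ge (Fl Fu : StieltjesFunction ℝ)
    (hFl : Tendsto Fl atBot (nhds 0) ∧ Tendsto Fl atTop (nhds 1))
    (hFu : Tendsto Fu atBot (nhds 0) ∧ Tendsto Fu atTop (nhds 1))
    (hle : ∀ x, Fl x ≤ Fu x)
    (b₀ b₁ : ℝ) (hb : b₀ ≤ b₁) (hpos : Fu b₀ < Fl b₁)
    (h : ℝ → ℝ) (hcont : Continuous h) (C : ℝ) (hbd : ∀ x, |h x| ≤ C)
    (α β : ℝ) (hαmem : α ∈ Icc (Fl b₀) (Fu b₀)) (hβmem : β ∈ Icc (Fl b₁) (Fu b₁))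
    (hαβ : α < β) {ε : ℝ} (hε : 0 < ε) :
    ∃ F₀ : StieltjesFunction ℝ,
      (Tendsto F₀ atBot (nhds 0) ∧ Tendsto F₀ atTop (nhds 1)) ∧
      (∀ x, Fl x ≤ F₀ x ∧ F₀ x ≤ Fu x) ∧
      F₀ b₀ = α ∧ F₀ b₁ = β ∧
      (∫ γ in Ioo α β, sSup (h '' (Icc (gU Fu γ) (gL Fl γ) ∩ Icc b₀ b₁))) - ε * (β - α)
        ≤ ∫ x in Ioc b₀ b₁, h x ∂F₀.measure := by
  have hb01 : b₀ < b₁ := by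
    rcases lt_or_eq_of_le hb with hlt | heq
    · exact hlt
    · exact absurd (lt_of_lt_of_le hpos (heq ▸ hle b₁)) (lt_irrefl _)
  have hα0 : 0 ≤ α := le_trans (stf_nonneg Fl hFl.1 b₀) hαmem.1
  have hβ1 : β ≤ 1 := le_trans hβmem.2 (stf_le_one Fu hFu.2 b₁)
  have hγfacts : ∀ γ ∈ Ioo α β, 0 < γ ∧ γ < 1 ∧ Fl b₀ < γ ∧ γ ≤ Fu b₁ := fun γ hγ =>
    ⟨lt_of_le_of_lt hα0 hγ.1, lt_of_lt_of_le hγ.2 hβ1,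
      lt_of_le_of_lt hαmem.1 hγ.1, le_trans hγ.2.le hβmem.2⟩
  set p := aC Fu b₀ b₁ with hp
  set q := cC Fl b₀ b₁ with hq
  set sel := selAux h ε p q with hsel
  have hselmeas : Measurable sel :=
    selAux_measurable hcont hε.le (aC_mono Fu hb).measurable (cC_mono Fl hb).measurable
  -- pointwise facts about p, q, sel on Ioo α β
  have hkey : ∀ γ ∈ Ioo α β,
      p γ = max (gU Fu γ) b₀ ∧ q γ = min (gL Fl γ) b₁ ∧ p γ ≤ q γ ∧ b₀ < q γ := by
    intro γ hγ
    obtain ⟨hγ0, hγ1, hγl, hγu⟩ := hγfacts γ hγ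
    have hpe : p γ = max (gU Fu γ) b₀ := aC_eq Fu hFu.1 hb hγ0 hγu
    have hqe : q γ = min (gL Fl γ) b₁ := cC_eq Fl hFl.2 hb hγ1 hγl
    have hq' : b₀ < q γ := hqe ▸ lt_min (b₀_lt_gL Fl hFl.2 hγ1 hγl) hb01
    have hpq : p γ ≤ q γ := by
      rw [hpe, hqe]
      refine max_le (le_min (gU_le_gL Fl Fu hFu.1 hFl.2 hle hγ0 hγ1)
        (gU_le_b₁ Fu hFu.1 hγ0 hγu)) (le_min (b₀_lt_gL Fl hFl.2 hγ1 hγl).le hb)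
    exact ⟨hpe, hqe, hpq, hq'⟩
  have hselfacts : ∀ γ ∈ Ioo α β,
      b₀ < sel γ ∧ sel γ ≤ b₁ ∧ p γ ≤ sel γ ∧
        sSup (h '' (Icc (gU Fu γ) (gL Fl γ) ∩ Icc b₀ b₁)) - ε ≤ h (sel γ) := by
    intro γ hγ
    obtain ⟨hpe, hqe, hpq, hq'⟩ := hkey γ hγ
    have hmem := selAux_mem hcont hε.le hpq
    have hgt : b₀ < sel γ := selAux_gt hcont hε hpq (hpe ▸ le_max_right _ _) hq'
    have hMeq : sSup (h '' Icc (p γ) (q γ))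
        = sSup (h '' (Icc (gU Fu γ) (gL Fl γ) ∩ Icc b₀ b₁)) := by
      rw [Icc_inter_Icc, hpe, hqe]
    exact ⟨hgt, hmem.1.2.trans (hqe ▸ min_le_right _ _), hmem.1.1, hMeq ▸ hmem.2⟩
  -- the distribution function
  set Gm : ℝ → ENNReal := fun x => volume (Ioo α β ∩ sel ⁻¹' Iic x) with hGm
  set G : ℝ → ℝ := fun x => (Gm x).toReal with hG
  have hGmeas : ∀ x, MeasurableSet (Ioo α β ∩ sel ⁻¹' Iic x) := fun x =>
    measurableSet_Ioo.inter (hselmeas measurableSet_Iic)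
  have hGmle : ∀ x, Gm x ≤ ENNReal.ofReal (β - α) := fun x => by
    rw [← Real.volume_Ioo]
    exact measure_mono inter_subset_left
  have hGmtop : ∀ x, Gm x ≠ ⊤ := fun x =>
    ne_top_of_le_ne_top ENNReal.ofReal_ne_top (hGmle x)
  have hGmono : Monotone G := by
    intro x y hxy
    exact ENNReal.toReal_mono (hGmtop y)
      (measure_mono (inter_subset_inter_right _ (preimage_mono (Iic_subset_Iic.2 hxy))))
  have hG0 : ∀ x, x ≤ b₀ → Gm x = 0 := by
    intro x hx
    have hem : Ioo α β ∩ sel ⁻¹' Iic x = ∅ := by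
      refine eq_empty_iff_forall_notMem.2 (fun γ hγ => ?_)
      have h1 : b₀ < sel γ := (hselfacts γ hγ.1).1
      have h2 : sel γ ≤ x := hγ.2
      linarith
    have hGmx : Gm x = volume (Ioo α β ∩ sel ⁻¹' Iic x) := rfl
    rw [hGmx, hem, measure_empty]
  have hGfull : ∀ x, b₁ ≤ x → Ioo α β ∩ sel ⁻¹' Iic x = Ioo α β := by
    intro x hx
    refine inter_eq_left.mpr (fun γ hγ => ?_)
    exact mem_preimage.2 (mem_Iic.2 ((hselfacts γ hγ).2.1.trans hx))
  have hGle : ∀ x, Gm x ≤ ENNReal.ofReal (Fu x - α) := by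
    intro x
    have hsub : Ioo α β ∩ sel ⁻¹' Iic x ⊆ Ioc α (Fu x) := by
      rintro γ ⟨hγ, hγx⟩
      obtain ⟨hγ0, hγ1, hγl, hγu⟩ := hγfacts γ hγ
      obtain ⟨hpe, -, -, -⟩ := hkey γ hγ
      have h1 : gU Fu γ ≤ sel γ := le_trans (hpe ▸ le_max_left _ _) (hselfacts γ hγ).2.2.1
      exact ⟨hγ.1, gU_le_imp Fu hFu.1 hγ0 hγu (h1.trans hγx)⟩
    calc Gm x ≤ volume (Ioc α (Fu x)) := measure_mono hsub
      _ = ENNReal.ofReal (Fu x - α) := Real.volume_Ioc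
  have hGge : ∀ x, ENNReal.ofReal (min β (Fl x) - α) ≤ Gm x := by
    intro x
    rw [← Real.volume_Ioo]
    refine measure_mono (fun γ hγ => ?_)
    have hγIoo : γ ∈ Ioo α β := ⟨hγ.1, lt_of_lt_of_le hγ.2 (min_le_left _ _)⟩
    obtain ⟨hγ0, hγ1, hγl, hγu⟩ := hγfacts γ hγIoo
    obtain ⟨-, hqe, hpq, -⟩ := hkey γ hγIoo
    have hqx : q γ ≤ x := by
      rw [hqe]
      exact (min_le_left _ _).trans (gL_le_of_lt Fl hγl (lt_of_lt_of_le hγ.2 (min_le_right _ _)))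
    exact ⟨hγIoo, mem_preimage.2 (mem_Iic.2 ((selAux_mem hcont hε.le hpq).1.2.trans hqx))⟩
  -- right-continuity input for G
  have hGrc : ∀ x, ∀ δ > (0:ℝ), ∃ y, x < y ∧ G y < G x + δ := by
    intro x δ hδ
    have hiInter : (⋂ n : ℕ, Ioo α β ∩ sel ⁻¹' Iic (x + 1 / (n + 1))) =
        Ioo α β ∩ sel ⁻¹' Iic x := by
      ext γ
      simp only [mem_iInter, mem_inter_iff, mem_preimage, mem_Iic]
      constructor
      · intro hall
        refine ⟨(hall 0).1, le_of_forall_pos_le_add (fun δ' hδ' => ?_)⟩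
        obtain ⟨n, hn⟩ := exists_nat_one_div_lt hδ'
        exact le_trans (hall n).2 (by linarith)
      · intro hγ n
        refine ⟨hγ.1, hγ.2.trans (le_add_of_nonneg_right (by positivity))⟩
    have htd : Tendsto (fun n : ℕ => Gm (x + 1 / (n + 1))) atTop (nhds (Gm x)) := by
      have := tendsto_measure_iInter_atTop (μ := volume)
        (s := fun n : ℕ => Ioo α β ∩ sel ⁻¹' Iic (x + 1 / (n + 1)))
        (fun n => (hGmeas _).nullMeasurableSet)
        (fun m n hmn => inter_subset_inter_right _ (preimage_mono (Iic_subset_Iic.2 (by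
          have : (1:ℝ) / (n + 1) ≤ 1 / (m + 1) := by
            apply one_div_le_one_div_of_le
            · positivity
            · exact_mod_cast add_le_add_left (Nat.cast_le.2 hmn) 1
          linarith))))
        ⟨0, hGmtop _⟩
      rwa [hiInter] at this
    have htdR : Tendsto (fun n : ℕ => G (x + 1 / (n + 1))) atTop (nhds (G x)) :=
      (ENNReal.tendsto_toReal (hGmtop x)).comp htd
    have hev : ∀ᶠ n : ℕ in atTop, G (x + 1 / (n + 1)) < G x + δ :=
      htdR.eventually (eventually_lt_nhds (by linarith))
    obtain ⟨n, hn⟩ := hev.exists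
    refine ⟨x + 1 / (n + 1), ?_, hn⟩
    have : (0:ℝ) < 1 / ((n:ℝ) + 1) := by positivity
    linarith
  -- basic bounds on G
  have hGnonneg : ∀ x, 0 ≤ G x := fun x => ENNReal.toReal_nonneg
  have hGb : ∀ x, G x ≤ β - α := fun x => by
    have := ENNReal.toReal_mono ENNReal.ofReal_ne_top (hGmle x)
    rwa [ENNReal.toReal_ofReal (by linarith)] at this
  have hGzero : ∀ x, x ≤ b₀ → G x = 0 := fun x hx => by
    have : G x = (Gm x).toReal := rfl
    rw [this, hG0 x hx, ENNReal.toReal_zero]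
  have hGβ : ∀ x, b₁ ≤ x → G x = β - α := fun x hx => by
    have h1 : Gm x = ENNReal.ofReal (β - α) := by
      have : Gm x = volume (Ioo α β ∩ sel ⁻¹' Iic x) := rfl
      rw [this, hGfull x hx, Real.volume_Ioo]
    have : G x = (Gm x).toReal := rfl
    rw [this, h1, ENNReal.toReal_ofReal (by linarith)]
  -- the function F₀
  set f₀ : ℝ → ℝ := fun x => if x < b₀ then min (Fu x) α
    else if x < b₁ then α + G x else max (Fl x) β with hf₀
  have hf₀val1 : ∀ x, x < b₀ → f₀ x = min (Fu x) α := fun x hx => by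
    simp only [hf₀, if_pos hx]
  have hf₀val2 : ∀ x, b₀ ≤ x → x < b₁ → f₀ x = α + G x := fun x hx1 hx2 => by
    simp only [hf₀, if_neg (not_lt.2 hx1), if_pos hx2]
  have hf₀val3 : ∀ x, b₁ ≤ x → f₀ x = max (Fl x) β := fun x hx => by
    simp only [hf₀, if_neg (not_lt.2 (hb.trans hx)), if_neg (not_lt.2 hx)]
  have hf₀b₀ : f₀ b₀ = α := by
    rw [hf₀val2 b₀ le_rfl hb01, hGzero b₀ le_rfl, add_zero]
  have hf₀b₁ : f₀ b₁ = β := by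
    rw [hf₀val3 b₁ le_rfl, max_eq_right hβmem.1]
  -- range bounds per region
  have hr1 : ∀ x, x < b₀ → f₀ x ≤ α := fun x hx => (hf₀val1 x hx) ▸ min_le_right _ _
  have hr2l : ∀ x, b₀ ≤ x → x < b₁ → α ≤ f₀ x := fun x hx1 hx2 => by
    rw [hf₀val2 x hx1 hx2]; linarith [hGnonneg x]
  have hr2u : ∀ x, b₀ ≤ x → x < b₁ → f₀ x ≤ β := fun x hx1 hx2 => by
    rw [hf₀val2 x hx1 hx2]; linarith [hGb x]
  have hr3 : ∀ x, b₁ ≤ x → β ≤ f₀ x := fun x hx => (hf₀val3 x hx) ▸ le_max_right _ _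
  -- monotonicity
  have hf₀mono : Monotone f₀ := by
    intro x y hxy
    rcases lt_or_ge x b₀ with hx1 | hx1
    · rcases lt_or_ge y b₀ with hy1 | hy1
      · rw [hf₀val1 x hx1, hf₀val1 y hy1]
        exact min_le_min (Fu.mono hxy) le_rfl
      · rcases lt_or_ge y b₁ with hy2 | hy2
        · exact le_trans (hr1 x hx1) (hr2l y hy1 hy2)
        · exact le_trans (hr1 x hx1) (le_trans (le_of_lt hαβ) (hr3 y hy2))
    · rcases lt_or_ge x b₁ with hx2 | hx2
      · rcases lt_or_ge y b₁ with hy2 | hy2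
        · rw [hf₀val2 x hx1 hx2, hf₀val2 y (hx1.trans hxy) hy2]
          exact add_le_add_right (hGmono hxy) α
        · exact le_trans (hr2u x hx1 hx2) (hr3 y hy2)
      · rw [hf₀val3 x hx2, hf₀val3 y (hx2.trans hxy)]
        exact max_le_max (Fl.mono hxy) le_rfl
  -- right continuity
  have hf₀rc : ∀ x, ContinuousWithinAt f₀ (Ici x) x := by
    intro x
    rcases lt_or_ge x b₀ with hx1 | hx1
    · have hcwa : ContinuousWithinAt (fun y => min (Fu y) α) (Ici x) x :=
        (Fu.right_continuous x).min tendsto_const_nhds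
      refine hcwa.congr_of_eventuallyEq ?_ (hf₀val1 x hx1)
      filter_upwards [mem_nhdsWithin_of_mem_nhds (Iio_mem_nhds hx1)] with y hy
      exact hf₀val1 y hy
    · rcases lt_or_ge x b₁ with hx2 | hx2
      · have hcwa : ContinuousWithinAt (fun y => α + G y) (Ici x) x :=
          (continuousWithinAt_const.add (monoRC hGmono (hGrc x)))
        refine hcwa.congr_of_eventuallyEq ?_ (hf₀val2 x hx1 hx2)
        filter_upwards [mem_nhdsWithin_of_mem_nhds (Iio_mem_nhds hx2),
          self_mem_nhdsWithin] with y hy1 hy2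
        exact hf₀val2 y (hx1.trans hy2) hy1
      · have hcwa : ContinuousWithinAt (fun y => max (Fl y) β) (Ici x) x :=
          (Fl.right_continuous x).max tendsto_const_nhds
        refine hcwa.congr_of_eventuallyEq ?_ (hf₀val3 x hx2)
        filter_upwards [self_mem_nhdsWithin] with y hy
        exact hf₀val3 y (hx2.trans hy)
  set F₀ : StieltjesFunction ℝ := ⟨f₀, hf₀mono, hf₀rc⟩ with hF₀
  have hF₀app : ∀ x, F₀ x = f₀ x := fun x => rfl
  -- tendsto at ±∞
  have hF₀bot : Tendsto F₀ atBot (nhds 0) := by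
    have h1 : Tendsto (fun x => min (Fu x) α) atBot (nhds (min 0 α)) :=
      hFu.1.min tendsto_const_nhds
    rw [min_eq_left hα0] at h1
    refine h1.congr' ?_
    filter_upwards [eventually_lt_atBot b₀] with x hx
    exact (hf₀val1 x hx).symm
  have hF₀top : Tendsto F₀ atTop (nhds 1) := by
    have h1 : Tendsto (fun x => max (Fl x) β) atTop (nhds (max 1 β)) :=
      hFl.2.max tendsto_const_nhds
    rw [max_eq_left hβ1] at h1
    refine h1.congr' ?_
    filter_upwards [eventually_ge_atTop b₁] with x hx
    exact (hf₀val3 x hx).symm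
  -- compatibility with the p-box
  have hF₀Φ : ∀ x, Fl x ≤ F₀ x ∧ F₀ x ≤ Fu x := by
    intro x
    rcases lt_or_ge x b₀ with hx1 | hx1
    · rw [hF₀app, hf₀val1 x hx1]
      exact ⟨le_min (hle x) (le_trans (Fl.mono hx1.le) hαmem.1), min_le_left _ _⟩
    · rcases lt_or_ge x b₁ with hx2 | hx2
      · rw [hF₀app, hf₀val2 x hx1 hx2]
        constructor
        · rcases le_or_gt (Fl x) α with hc | hc
          · linarith [hGnonneg x]
          · have h1 := ENNReal.toReal_mono (hGmtop x) (hGge x)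
            rw [ENNReal.toReal_ofReal (by
              rw [min_eq_right (le_trans (Fl.mono hx2.le) hβmem.1)]; linarith)] at h1
            rw [min_eq_right (le_trans (Fl.mono hx2.le) hβmem.1)] at h1
            have : G x = (Gm x).toReal := rfl
            rw [← this] at h1
            linarith
        · have h1 := ENNReal.toReal_mono ENNReal.ofReal_ne_top (hGle x)
          have hFux : α ≤ Fu x := le_trans hαmem.2 (Fu.mono hx1)
          rw [ENNReal.toReal_ofReal (by linarith)] at h1
          have : G x = (Gm x).toReal := rfl
          rw [← this] at h1
          linarith
      · rw [hF₀app, hf₀val3 x hx2]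
        exact ⟨le_max_left _ _, max_le (hle x) (le_trans hβmem.2 (Fu.mono hx2))⟩
  -- the Iic identity
  have hIic : ∀ x, Measure.map sel (volume.restrict (Ioo α β)) (Iic x)
      = (F₀.measure.restrict (Ioc b₀ b₁)) (Iic x) := by
    intro x
    rw [Measure.map_apply hselmeas measurableSet_Iic,
      Measure.restrict_apply' measurableSet_Ioo,
      Measure.restrict_apply' measurableSet_Ioc]
    have hset2 : Iic x ∩ Ioc b₀ b₁ = Ioc b₀ (min x b₁) := by
      ext y
      simp only [mem_inter_iff, mem_Iic, mem_Ioc, le_min_iff]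
      tauto
    have hL : volume (sel ⁻¹' Iic x ∩ Ioo α β) = Gm x := by
      rw [inter_comm]
    rw [hset2, hL, F₀.measure_Ioc]
    have hFb₀ : F₀ b₀ = α := hf₀b₀
    rcases lt_or_ge x b₀ with hx1 | hx1
    · rw [min_eq_left (hx1.le.trans hb), hFb₀]
      have : F₀ x = min (Fu x) α := hf₀val1 x hx1
      rw [this, hG0 x hx1.le]
      symm
      rw [ENNReal.ofReal_eq_zero]
      have : min (Fu x) α ≤ α := min_le_right _ _
      linarith
    · rcases lt_or_ge x b₁ with hx2 | hx2
      · rw [min_eq_left hx2.le, hFb₀]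
        have : F₀ x = α + G x := hf₀val2 x hx1 hx2
        rw [this]
        have : α + G x - α = G x := by ring
        rw [this]
        exact (ENNReal.ofReal_toReal (hGmtop x)).symm
      · rw [min_eq_right hx2, hFb₀]
        have : F₀ b₁ = β := hf₀b₁
        rw [this]
        have : Gm b₁ = ENNReal.ofReal (β - α) := by
          have h1 : Gm b₁ = volume (Ioo α β ∩ sel ⁻¹' Iic b₁) := rfl
          rw [h1, hGfull b₁ le_rfl, Real.volume_Ioo]
        calc Gm x = Gm b₁ := by
              have h1 : Gm x = volume (Ioo α β ∩ sel ⁻¹' Iic x) := rfl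
              have h2 : Ioo α β ∩ sel ⁻¹' Iic x = Ioo α β := by
                refine inter_eq_left.mpr (fun γ hγ => ?_)
                exact mem_preimage.2 (mem_Iic.2 ((hselfacts γ hγ).2.1.trans hx2))
              rw [h1, h2, ← hGfull b₁ le_rfl]
          _ = ENNReal.ofReal (β - α) := this
  -- representation of the integral
  have hrep : ∫ x in Ioc b₀ b₁, h x ∂F₀.measure = ∫ γ in Ioo α β, h (sel γ) :=
    rep_integral F₀ h hcont sel α β b₀ b₁ hselmeas.aemeasurable hIic
  -- integrability
  have hint1 : IntegrableOn (fun γ => h (sel γ)) (Ioo α β) := by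
    refine Integrable.mono' (integrable_const C)
      (hcont.measurable.comp hselmeas).aestronglyMeasurable
      (ae_of_all _ (fun γ => ?_))
    rw [Real.norm_eq_abs]; exact hbd _
  have hint2 : IntegrableOn
      (fun γ => sSup (h '' (Icc (gU Fu γ) (gL Fl γ) ∩ Icc b₀ b₁))) (Ioo α β) := by
    have hmeasg : Measurable (fun γ => sSup (h '' Icc (aC Fu b₀ b₁ γ) (cC Fl b₀ b₁ γ))) :=
      measurable_sSup_image_Icc hcont (aC_mono Fu hb).measurable (cC_mono Fl hb).measurable
    have heq : (fun γ => sSup (h '' Icc (aC Fu b₀ b₁ γ) (cC Fl b₀ b₁ γ)))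
        =ᵐ[volume.restrict (Ioo α β)]
        (fun γ => sSup (h '' (Icc (gU Fu γ) (gL Fl γ) ∩ Icc b₀ b₁))) := by
      refine (ae_restrict_iff' measurableSet_Ioo).2 (ae_of_all _ (fun γ hγ => ?_))
      obtain ⟨hγ0, hγ1, hγl, hγu⟩ := hγfacts γ hγ
      simp only [Icc_inter_Icc]
      rw [aC_eq Fu hFu.1 hb hγ0 hγu, cC_eq Fl hFl.2 hb hγ1 hγl]
    refine Integrable.mono' (integrable_const C)
      (hmeasg.aestronglyMeasurable.congr heq) (ae_of_all _ (fun γ => ?_))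
    rw [Real.norm_eq_abs]; exact M_abs_le hcont hbd _ _ _ _
  -- integral comparison
  have hptw : ∀ γ ∈ Ioo α β,
      sSup (h '' (Icc (gU Fu γ) (gL Fl γ) ∩ Icc b₀ b₁)) - ε ≤ h (sel γ) :=
    fun γ hγ => (hselfacts γ hγ).2.2.2
  have hcomp : ∫ γ in Ioo α β, (sSup (h '' (Icc (gU Fu γ) (gL Fl γ) ∩ Icc b₀ b₁)) - ε)
      ≤ ∫ γ in Ioo α β, h (sel γ) :=
    setIntegral_mono_on (hint2.sub (integrable_const ε)) hint1 measurableSet_Ioo hptw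
  have hsplit : ∫ γ in Ioo α β, (sSup (h '' (Icc (gU Fu γ) (gL Fl γ) ∩ Icc b₀ b₁)) - ε)
      = (∫ γ in Ioo α β, sSup (h '' (Icc (gU Fu γ) (gL Fl γ) ∩ Icc b₀ b₁))) - ε * (β - α) := by
    rw [integral_sub hint2 (integrable_const ε), setIntegral_const, Real.volume_real_Ioo_of_le (by linarith), smul_eq_mul]
    ring
  refine ⟨F₀, ⟨hF₀bot, hF₀top⟩, hF₀Φ, hf₀b₀, hf₀b₁, ?_⟩
  rw [hrep]
  rw [hsplit] at hcomp
  exact hcomp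

end UCERS


open UCERS in
/-- Random-set formula for the upper conditional expectation
given `B = [b₀,b₁]`: it is the supremum over admissible endpoint values
`α, β` of `(β−α)⁻¹ ∫_α^β sup_{x ∈ A_γ ∩ B} h(x) dγ`. -/
theorem upper_conditional_expectation_random_set
    (Fl Fu : StieltjesFunction ℝ)
    (hFl : Tendsto Fl atBot (nhds 0) ∧ Tendsto Fl atTop (nhds 1))
    (hFu : Tendsto Fu atBot (nhds 0) ∧ Tendsto Fu atTop (nhds 1))
    (hle : ∀ x, Fl x ≤ Fu x)
    (b₀ b₁ : ℝ) (hb : b₀ ≤ b₁) (hpos : Fu b₀ < Fl b₁)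
    (h : ℝ → ℝ) (hcont : Continuous h) (C : ℝ) (hbd : ∀ x, |h x| ≤ C)
    (Φ : Set (StieltjesFunction ℝ))
    (hΦ : Φ = {F : StieltjesFunction ℝ |
        (Tendsto F atBot (nhds 0) ∧ Tendsto F atTop (nhds 1)) ∧
          ∀ x, Fl x ≤ F x ∧ F x ≤ Fu x}) :
    sSup ((fun F : StieltjesFunction ℝ =>
        (∫ x in Ioc b₀ b₁, h x ∂F.measure) / (F b₁ - F b₀)) '' Φ)
      = sSup {v : ℝ | ∃ α β : ℝ,
          α ∈ Icc (Fl b₀) (Fu b₀) ∧ β ∈ Icc (Fl b₁) (Fu b₁) ∧ α < β ∧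
          v = (β - α)⁻¹ *
            ∫ γ in α..β,
              sSup (h '' (Icc (sSup {x : ℝ | Fu x < γ})
                (sInf {x : ℝ | Fl x > γ}) ∩ Icc b₀ b₁))} := by
  subst hΦ
  have hC0 : 0 ≤ C := (abs_nonneg (h 0)).trans (hbd 0)
  set D : StieltjesFunction ℝ → ℝ :=
    fun F => (∫ x in Ioc b₀ b₁, h x ∂F.measure) / (F b₁ - F b₀) with hD
  set M : ℝ → ℝ := fun γ => sSup (h '' (Icc (sSup {x : ℝ | Fu x < γ})
    (sInf {x : ℝ | Fl x > γ}) ∩ Icc b₀ b₁)) with hM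
  have hMgul : ∀ γ, M γ = sSup (h '' (Icc (gU Fu γ) (gL Fl γ) ∩ Icc b₀ b₁)) := fun γ => rfl
  -- bound on D for compatible F
  have hDle : ∀ F : StieltjesFunction ℝ,
      (Tendsto F atBot (nhds 0) ∧ Tendsto F atTop (nhds 1)) →
      (∀ x, Fl x ≤ F x ∧ F x ≤ Fu x) → D F ≤ C := by
    intro F hFt hFb
    haveI : IsFiniteMeasure F.measure := F.isFiniteMeasure hFt.1 hFt.2
    have hd : 0 < F b₁ - F b₀ := by
      have h1 : Fl b₁ ≤ F b₁ := (hFb b₁).1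
      have h2 : F b₀ ≤ Fu b₀ := (hFb b₀).2
      linarith
    have hnum : ∫ x in Ioc b₀ b₁, h x ∂F.measure ≤ C * (F b₁ - F b₀) := by
      have hb1 : ‖∫ x in Ioc b₀ b₁, h x ∂F.measure‖
          ≤ C * ((F.measure.restrict (Ioc b₀ b₁)) univ).toReal := by
        refine norm_integral_le_of_norm_le_const (ae_of_all _ (fun x => ?_))
        rw [Real.norm_eq_abs]; exact hbd x
      rw [Measure.restrict_apply_univ, F.measure_Ioc,
        ENNReal.toReal_ofReal (by linarith)] at hb1
      exact (le_abs_self _).trans ((Real.norm_eq_abs _) ▸ hb1)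
    simp only [hD]
    rw [div_le_iff₀ hd]
    exact hnum
  -- the RHS set elements are bounded by C
  have hVle : ∀ α β : ℝ, α < β → (β - α)⁻¹ * (∫ γ in α..β, M γ) ≤ C := by
    intro α β hαβ
    have hI : ‖∫ γ in α..β, M γ‖ ≤ C * |β - α| := by
      refine intervalIntegral.norm_integral_le_of_norm_le_const (fun γ _ => ?_)
      rw [Real.norm_eq_abs, hM]
      exact M_abs_le hcont hbd _ _ _ _
    rw [abs_of_pos (by linarith : (0:ℝ) < β - α)] at hI
    have h1 : (∫ γ in α..β, M γ) ≤ C * (β - α) := (le_abs_self _).trans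
      ((Real.norm_eq_abs _) ▸ hI)
    have h2 : (0:ℝ) < (β - α)⁻¹ := inv_pos.2 (by linarith)
    calc (β - α)⁻¹ * (∫ γ in α..β, M γ) ≤ (β - α)⁻¹ * (C * (β - α)) :=
          mul_le_mul_of_nonneg_left h1 h2.le
      _ = C := by
          rw [mul_comm C (β - α), ← mul_assoc, inv_mul_cancel₀ (by linarith : (β:ℝ) - α ≠ 0),
            one_mul]
  have hbdd1 : BddAbove (D '' {F : StieltjesFunction ℝ |
      (Tendsto F atBot (nhds 0) ∧ Tendsto F atTop (nhds 1)) ∧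
        ∀ x, Fl x ≤ F x ∧ F x ≤ Fu x}) := by
    refine ⟨C, fun y hy => ?_⟩
    obtain ⟨F, ⟨hFt, hFb⟩, rfl⟩ := hy
    exact hDle F hFt hFb
  have hbdd2 : BddAbove {v : ℝ | ∃ α β : ℝ,
      α ∈ Icc (Fl b₀) (Fu b₀) ∧ β ∈ Icc (Fl b₁) (Fu b₁) ∧ α < β ∧
      v = (β - α)⁻¹ * ∫ γ in α..β, M γ} := by
    refine ⟨C, fun y hy => ?_⟩
    obtain ⟨α, β, -, -, hαβ, rfl⟩ := hy
    exact hVle α β hαβ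
  have hne1 : (D '' {F : StieltjesFunction ℝ |
      (Tendsto F atBot (nhds 0) ∧ Tendsto F atTop (nhds 1)) ∧
        ∀ x, Fl x ≤ F x ∧ F x ≤ Fu x}).Nonempty :=
    ⟨D Fl, mem_image_of_mem D ⟨hFl, fun x => ⟨le_rfl, hle x⟩⟩⟩
  have hne2 : {v : ℝ | ∃ α β : ℝ,
      α ∈ Icc (Fl b₀) (Fu b₀) ∧ β ∈ Icc (Fl b₁) (Fu b₁) ∧ α < β ∧
      v = (β - α)⁻¹ * ∫ γ in α..β, M γ}.Nonempty :=
    ⟨_, Fu b₀, Fl b₁, ⟨hle b₀, le_rfl⟩, ⟨le_rfl, hle b₁⟩, hpos, rfl⟩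
  refine le_antisymm ?_ ?_
  · -- LHS ≤ RHS
    refine csSup_le hne1 ?_
    rintro y ⟨F, ⟨hFt, hFb⟩, rfl⟩
    have hd : 0 < F b₁ - F b₀ := by
      have h1 : Fl b₁ ≤ F b₁ := (hFb b₁).1
      have h2 : F b₀ ≤ Fu b₀ := (hFb b₀).2
      linarith
    have hnum := dir_le Fl Fu hFl hFu b₀ b₁ hb hpos h hcont C hbd F hFt.1 hFt.2 hFb
    have hItoIoo : (∫ γ in (F b₀)..(F b₁), M γ)
        = ∫ γ in Ioo (F b₀) (F b₁), M γ := by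
      rw [intervalIntegral.integral_of_le (by linarith : F b₀ ≤ F b₁),
        integral_Ioc_eq_integral_Ioo]
    have hDF : D F ≤ (F b₁ - F b₀)⁻¹ * ∫ γ in (F b₀)..(F b₁), M γ := by
      simp only [hD]
      rw [div_eq_inv_mul, hItoIoo]
      refine mul_le_mul_of_nonneg_left ?_ (inv_pos.2 hd).le
      simpa only [hMgul] using hnum
    refine hDF.trans (le_csSup hbdd2 ?_)
    exact ⟨F b₀, F b₁, ⟨(hFb b₀).1, (hFb b₀).2⟩, ⟨(hFb b₁).1, (hFb b₁).2⟩, by linarith, rfl⟩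
  · -- RHS ≤ LHS
    refine csSup_le hne2 ?_
    rintro v ⟨α, β, hαm, hβm, hαβ, rfl⟩
    refine le_of_forall_pos_le_add ?_
    intro ε hε
    obtain ⟨F₀, hF₀t, hF₀b, hF₀b₀, hF₀b₁, hF₀int⟩ :=
      dir_ge Fl Fu hFl hFu hle b₀ b₁ hb hpos h hcont C hbd α β hαm hβm hαβ hε
    have hd : F₀ b₁ - F₀ b₀ = β - α := by rw [hF₀b₀, hF₀b₁]
    have hItoIoo : (∫ γ in α..β, M γ) = ∫ γ in Ioo α β, M γ := by
      rw [intervalIntegral.integral_of_le hαβ.le, integral_Ioc_eq_integral_Ioo]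
    have hvle : (β - α)⁻¹ * (∫ γ in α..β, M γ) ≤ D F₀ + ε := by
      simp only [hD]
      rw [hd, div_eq_inv_mul, hItoIoo]
      have hnum : (∫ γ in Ioo α β, M γ) - ε * (β - α)
          ≤ ∫ x in Ioc b₀ b₁, h x ∂F₀.measure := by
        simpa only [hMgul] using hF₀int
      have hinv : (0:ℝ) < (β - α)⁻¹ := inv_pos.2 (by linarith)
      have h1 : (β - α)⁻¹ * (∫ γ in Ioo α β, M γ)
          ≤ (β - α)⁻¹ * ((∫ x in Ioc b₀ b₁, h x ∂F₀.measure) + ε * (β - α)) :=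
        mul_le_mul_of_nonneg_left (by linarith) hinv.le
      have h2 : (β - α)⁻¹ * ((∫ x in Ioc b₀ b₁, h x ∂F₀.measure) + ε * (β - α))
          = (β - α)⁻¹ * (∫ x in Ioc b₀ b₁, h x ∂F₀.measure) + ε := by
        field_simp
        rw [add_div, mul_div_cancel_left₀ ε (by linarith : (β:ℝ) - α ≠ 0)]
      linarith
    refine hvle.trans ?_
    have : D F₀ ≤ sSup (D '' {F : StieltjesFunction ℝ |
        (Tendsto F atBot (nhds 0) ∧ Tendsto F atTop (nhds 1)) ∧
          ∀ x, Fl x ≤ F x ∧ F x ≤ Fu x}) :=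
      le_csSup hbdd1 (mem_image_of_mem D ⟨hF₀t, hF₀b⟩)
    linarith
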